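/- There exists K such that the following holds for every integer k ≥ K with k ≡ 0 (mod 4). Set m_k = ⌊k/12⌋ + 1 and a(n) = (2k/|B_k|) σ_{k−1}(n). Let b : {1, …, m_k − 1} → ℝ satisfy |b(m)| ≤ min(a(m), 1) for all 1 ≤ m < m_k, and define C_k = √(log k) · ( 11·√( ∑_{m=1}^{m_k−1} b(m)²/m^{k−1} ) + e^{18.72} · (41.41)^{k/2} · k^{−(k−1)/2} · | ∑_{m=1}^{m_k−1} b(m) e^{−7.288 m} | ). Then 2 C_k n^{k/2} ≤ a(n) for all integers n ≥ m_k. -/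

import Mathlib

set_option maxHeartbeats 1000000

open Filter Real
open Nat

/-- The divisor power sum `σ_l(n) = ∑_{d ∣ n} d^l`, as a real number. -/
noncomputable def sigmaR (l n : ℕ) : ℝ := ∑ d ∈ n.divisors, (d : ℝ) ^ l

/-- `m_k = ⌊k/12⌋ + 1`, the dimension of the space of weight-`k` modular forms for
`k ≢ 2 mod 12`. -/
def mDim (k : ℕ) : ℕ := k / 12 + 1

/-- `a(n) = (2k/|B_k|) σ_{k−1}(n)`, the `n`-th Fourier coefficient of the weight-`k`
Eisenstein series. -/
noncomputable def aCoef (k n : ℕ) : ℝ :=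
  (2 * (k : ℝ) / |((bernoulli k : ℚ) : ℝ)|) * sigmaR (k - 1) n

/-- `C_k = √(log k) · ( 11·√( ∑_{m=1}^{m_k−1} b(m)²/m^{k−1} )
  + e^{18.72} · (41.41)^{k/2} · k^{−(k−1)/2} · | ∑_{m=1}^{m_k−1} b(m) e^{−7.288 m} | )`. -/
noncomputable def C7 (k : ℕ) (b : ℕ → ℝ) : ℝ :=
  Real.sqrt (Real.log k) *
    (11 * Real.sqrt (∑ m ∈ Finset.Ico 1 (mDim k), (b m) ^ 2 / (m : ℝ) ^ (k - 1)) +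
      Real.exp 18.72 * (41.41 : ℝ) ^ ((k : ℝ) / 2) * (k : ℝ) ^ (-(((k : ℝ) - 1) / 2)) *
        |∑ m ∈ Finset.Ico 1 (mDim k), b m * Real.exp (-7.288 * (m : ℝ))|)




lemma sigmaR_nonneg (l n : ℕ) : 0 ≤ sigmaR l n := by
  unfold sigmaR; positivity

lemma le_sigmaR (l : ℕ) {n : ℕ} (hn : 1 ≤ n) : (n:ℝ)^l ≤ sigmaR l n := by
  unfold sigmaR
  exact Finset.single_le_sum (f := fun d : ℕ => (d:ℝ)^l) (fun d _ => by positivity)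
    (Nat.mem_divisors_self n (by omega))

lemma sigmaR_le (l : ℕ) (n : ℕ) : sigmaR l n ≤ (n:ℝ)^l * n := by
  unfold sigmaR
  calc ∑ d ∈ n.divisors, (d:ℝ)^l ≤ ∑ _d ∈ n.divisors, (n:ℝ)^l := by
        apply Finset.sum_le_sum
        intro d hd
        have hdn : d ≤ n := Nat.divisor_le hd
        exact pow_le_pow_left₀ (by positivity) (by exact_mod_cast hdn) l
    _ = n.divisors.card * (n:ℝ)^l := by rw [Finset.sum_const, nsmul_eq_mul]
    _ ≤ (n:ℝ) * (n:ℝ)^l := by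
        have h1 : n.divisors ⊆ Finset.Icc 1 n := by
          intro d hd
          rw [Finset.mem_Icc]
          exact ⟨(Nat.pos_of_mem_divisors hd), Nat.divisor_le hd⟩
        have h2 : n.divisors.card ≤ n := by
          calc n.divisors.card ≤ (Finset.Icc 1 n).card := Finset.card_le_card h1
            _ = n := by rw [Nat.card_Icc]; omega
        have : (n.divisors.card : ℝ) ≤ (n:ℝ) := by exact_mod_cast h2
        exact mul_le_mul_of_nonneg_right this (by positivity)
    _ = (n:ℝ)^l * n := by ring

lemma factorial_aux : ∀ k : ℕ, 1 ≤ k → (k ! : ℝ) * (Real.exp 1)^(k-1) ≤ (k:ℝ)^(k+1) := by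
  intro k
  induction k with
  | zero => omega
  | succ k ih =>
    intro _
    rcases Nat.eq_zero_or_pos k with hk0 | hk1
    · subst hk0; simp [Nat.factorial]
    · have ihh := ih hk1
      have hkR : (1:ℝ) ≤ (k:ℝ) := by exact_mod_cast hk1
      have hkey : Real.exp 1 * (k:ℝ)^(k+1) ≤ ((k:ℝ)+1)^(k+1) := by
        have hx : (0:ℝ) < ((k:ℝ)+1)/(k:ℝ) := by positivity
        have hlog : Real.log ((k:ℝ)/((k:ℝ)+1)) ≤ (k:ℝ)/((k:ℝ)+1) - 1 :=
          Real.log_le_sub_one_of_pos (by positivity)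
        have hlog2 : (1:ℝ) ≤ (k+1 : ℝ) * Real.log (((k:ℝ)+1)/(k:ℝ)) := by
          have hld : Real.log (((k:ℝ)+1)/(k:ℝ)) = - Real.log ((k:ℝ)/((k:ℝ)+1)) := by
            rw [← Real.log_inv]; congr 1; field_simp
          rw [hld]
          have h3 : (1:ℝ)/((k:ℝ)+1) ≤ - Real.log ((k:ℝ)/((k:ℝ)+1)) := by
            have : (k:ℝ)/((k:ℝ)+1) - 1 = -(1/((k:ℝ)+1)) := by field_simp; ring
            linarith [hlog]
          calc (1:ℝ) = ((k:ℝ)+1) * (1/((k:ℝ)+1)) := by field_simp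
            _ ≤ ((k:ℝ)+1) * (- Real.log ((k:ℝ)/((k:ℝ)+1))) := by
                apply mul_le_mul_of_nonneg_left h3 (by positivity)
            _ = (k+1:ℝ) * (- Real.log ((k:ℝ)/((k:ℝ)+1))) := by norm_num
        have hpow : (((k:ℝ)+1)/(k:ℝ))^(k+1) = Real.exp ((k+1:ℝ) * Real.log (((k:ℝ)+1)/(k:ℝ))) := by
          rw [← Real.rpow_natCast, Real.rpow_def_of_pos hx]
          push_cast; ring_nf
        have : Real.exp 1 ≤ (((k:ℝ)+1)/(k:ℝ))^(k+1) := by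
          rw [hpow]
          exact Real.exp_le_exp.mpr hlog2
        calc Real.exp 1 * (k:ℝ)^(k+1) ≤ (((k:ℝ)+1)/(k:ℝ))^(k+1) * (k:ℝ)^(k+1) := by
              exact mul_le_mul_of_nonneg_right this (by positivity)
          _ = ((k:ℝ)+1)^(k+1) := by
              rw [div_pow, div_mul_eq_mul_div, mul_div_assoc, div_self (by positivity), mul_one]
      have h1 : ((k+1)! : ℝ) * (Real.exp 1)^(k+1-1) = ((k:ℝ)+1) * ((k ! : ℝ) * (Real.exp 1)^(k-1)) * Real.exp 1 := by
        have hk' : k = (k-1)+1 := by omega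
        have hpows : Real.exp 1 ^ k = Real.exp 1 ^ (k-1) * Real.exp 1 := by
          conv_lhs => rw [hk']
          rw [pow_succ]
        rw [Nat.factorial_succ]
        push_cast
        rw [hpows]; ring
      calc ((k+1)! : ℝ) * (Real.exp 1)^(k+1-1)
          = ((k:ℝ)+1) * ((k ! : ℝ) * (Real.exp 1)^(k-1)) * Real.exp 1 := h1
        _ ≤ ((k:ℝ)+1) * (k:ℝ)^(k+1) * Real.exp 1 := by
            apply mul_le_mul_of_nonneg_right _ (Real.exp_pos 1).le
            exact mul_le_mul_of_nonneg_left ihh (by positivity)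
        _ = ((k:ℝ)+1) * (Real.exp 1 * (k:ℝ)^(k+1)) := by ring
        _ ≤ ((k:ℝ)+1) * ((k:ℝ)+1)^(k+1) := mul_le_mul_of_nonneg_left hkey (by positivity)
        _ = ((k:ℝ)+1)^(k+1+1) := by rw [← _root_.pow_succ']
        _ = ((k+1:ℕ):ℝ)^(k+1+1) := by push_cast; ring


lemma exp_point_one_le : Real.exp 0.1 ≤ 10/9 := by
  have h := Real.add_one_le_exp (-0.1)
  have h2 : Real.exp (-0.1) = (Real.exp 0.1)⁻¹ := Real.exp_neg 0.1
  have h3 : (0.9:ℝ) ≤ (Real.exp 0.1)⁻¹ := by rw [← h2]; linarith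
  have h4 := Real.exp_pos 0.1
  rw [le_inv_comm₀ (by norm_num) h4] at h3
  linarith [h3]

lemma exp_hundredth_le : Real.exp 0.01 ≤ 100/99 := by
  have h := Real.add_one_le_exp (-0.01)
  have h2 : Real.exp (-0.01) = (Real.exp 0.01)⁻¹ := Real.exp_neg 0.01
  have h3 : (0.99:ℝ) ≤ (Real.exp 0.01)⁻¹ := by rw [← h2]; linarith
  have h4 := Real.exp_pos 0.01
  rw [le_inv_comm₀ (by norm_num) h4] at h3
  linarith [h3]

lemma log18_ge : (2.8:ℝ) ≤ Real.log 18 := by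
  rw [Real.le_log_iff_exp_le (by norm_num)]
  have he : Real.exp 2.8 = Real.exp 1 * Real.exp 1 * (Real.exp 0.1)^(8:ℕ) := by
    rw [← Real.exp_nat_mul, ← Real.exp_add, ← Real.exp_add]; norm_num
  rw [he]
  have h1 : Real.exp 1 ≤ 2.7182818286 := (Real.exp_one_lt_d9).le
  calc Real.exp 1 * Real.exp 1 * (Real.exp 0.1)^(8:ℕ)
      ≤ 2.7182818286 * 2.7182818286 * (10/9:ℝ)^(8:ℕ) := by
        gcongr <;> first | positivity | exact exp_point_one_le | exact Real.exp_one_lt_d9.le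
    _ ≤ 18 := by norm_num

lemma log12_le : Real.log 12 ≤ 2.6 := by
  rw [Real.log_le_iff_le_exp (by norm_num)]
  have he : Real.exp 2.6 = Real.exp 1 * Real.exp 1 * (Real.exp 0.15)^(4:ℕ) := by
    rw [← Real.exp_nat_mul, ← Real.exp_add, ← Real.exp_add]; norm_num
  rw [he]
  have h1 : (2.7182818283:ℝ) ≤ Real.exp 1 := (Real.exp_one_gt_d9).le
  have h2 : (1.15:ℝ) ≤ Real.exp 0.15 := by linarith [Real.add_one_le_exp (0.15:ℝ)]
  calc (12:ℝ) ≤ 2.7182818283 * 2.7182818283 * (1.15:ℝ)^(4:ℕ) := by norm_num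
    _ ≤ Real.exp 1 * Real.exp 1 * (Real.exp 0.15)^(4:ℕ) := by
        gcongr <;> norm_num

lemma log2pi_ge : (1.83:ℝ) ≤ Real.log (2*π) := by
  rw [Real.le_log_iff_exp_le (by positivity)]
  have he : Real.exp 1.83 = Real.exp 1 * (Real.exp 0.01)^(83:ℕ) := by
    rw [← Real.exp_nat_mul, ← Real.exp_add]; norm_num
  rw [he]
  have h1 : Real.exp 1 ≤ 2.7182818286 := (Real.exp_one_lt_d9).le
  have hpi : (3.141592:ℝ) ≤ π := Real.pi_gt_d6.le
  calc Real.exp 1 * (Real.exp 0.01)^(83:ℕ)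
      ≤ 2.7182818286 * (100/99:ℝ)^(83:ℕ) := by
        gcongr <;> first | positivity | exact exp_hundredth_le | exact Real.exp_one_lt_d9.le
    _ ≤ 2 * 3.141592 := by norm_num
    _ ≤ 2 * π := by linarith

lemma log41_le : Real.log 41.41 ≤ 3.76 := by
  have he4 : (54.5:ℝ) ≤ Real.exp 4 := by
    have he : Real.exp 4 = (Real.exp 1)^(4:ℕ) := by
      rw [← Real.exp_nat_mul]; norm_num
    rw [he]
    have h1 : (2.7182818283:ℝ) ≤ Real.exp 1 := (Real.exp_one_gt_d9).le
    calc (54.5:ℝ) ≤ (2.7182818283:ℝ)^(4:ℕ) := by norm_num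
      _ ≤ (Real.exp 1)^(4:ℕ) := by gcongr
  have h0 : Real.log 41.41 - 4 = Real.log (41.41 * Real.exp (-4)) := by
    rw [Real.log_mul (by norm_num) (Real.exp_ne_zero _), Real.log_exp]
    ring
  have h1 : Real.log (41.41 * Real.exp (-4)) ≤ 41.41 * Real.exp (-4) - 1 :=
    Real.log_le_sub_one_of_pos (by positivity)
  have h2 : Real.exp (-4) ≤ 1/54.5 := by
    rw [Real.exp_neg]
    have := one_div_le_one_div_of_le (show (0:ℝ) < 54.5 by norm_num) he4
    simp only [one_div] at this ⊢
    linarith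
  nlinarith [h0, h1, h2, Real.exp_pos (-4)]

lemma log7744_le : Real.log 7744 ≤ 9 := by
  rw [Real.log_le_iff_le_exp (by norm_num)]
  have he : Real.exp 9 = (Real.exp 1)^(9:ℕ) := by rw [← Real.exp_nat_mul]; norm_num
  rw [he]
  have h1 : (2.7182818283:ℝ) ≤ Real.exp 1 := (Real.exp_one_gt_d9).le
  calc (7744:ℝ) ≤ (2.7182818283:ℝ)^(9:ℕ) := by norm_num
    _ ≤ (Real.exp 1)^(9:ℕ) := by gcongr

lemma log2pie : Real.log (2*π*Real.exp 1) = Real.log (2*π) + 1 := by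
  rw [Real.log_mul (by positivity) (Real.exp_ne_zero 1), Real.log_exp]

lemma log2e_le : Real.log (2*Real.exp 1) ≤ 2 := by
  rw [Real.log_mul (by norm_num) (Real.exp_ne_zero 1), Real.log_exp]
  linarith [Real.log_le_sub_one_of_pos (show (0:ℝ) < 2 by norm_num)]


lemma mono_aux {x y c : ℝ} (hx : 1 ≤ x) (hxy : x ≤ y) (hc : 7.288 * y ≤ c) :
    x ^ c * Real.exp (-7.288 * x) ≤ y ^ c * Real.exp (-7.288 * y) := by
  have hx0 : (0:ℝ) < x := by linarith
  have hy0 : (0:ℝ) < y := by linarith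
  rw [Real.rpow_def_of_pos hx0, Real.rpow_def_of_pos hy0, ← Real.exp_add, ← Real.exp_add]
  apply Real.exp_le_exp.mpr
  have h1 : Real.log x - Real.log y ≤ x/y - 1 := by
    rw [← Real.log_div hx0.ne' hy0.ne']
    exact Real.log_le_sub_one_of_pos (by positivity)
  have hc0 : (0:ℝ) ≤ c := by linarith
  -- need : log x * c - 7.288 x ≤ log y * c - 7.288 y
  have h2 : (Real.log y - Real.log x) * y ≥ y - x := by
    have := mul_le_mul_of_nonneg_right h1 hy0.le
    have hxy' : (x/y - 1) * y = x - y := by field_simp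
    nlinarith
  nlinarith [mul_le_mul_of_nonneg_right hc (sub_nonneg.mpr hxy),
    mul_le_mul_of_nonneg_left h2 hc0, Real.log_le_log hx0 hxy]


lemma bernoulli_bounds {j : ℕ} (hj : 1 ≤ j) :
    0 < |((bernoulli (2*j) : ℚ) : ℝ)| ∧
    |((bernoulli (2*j) : ℚ) : ℝ)| * (2*π)^(2*j) ≤ 4 * ((2*j)! : ℝ) := by
  set B : ℝ := ((bernoulli (2*j) : ℚ) : ℝ) with hBdef
  set F : ℝ := ((2*j)! : ℝ) with hFdef
  have hFpos : (0:ℝ) < F := by rw [hFdef]; exact_mod_cast Nat.factorial_pos (2*j)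
  set z : ℝ := (-1 : ℝ) ^ (j + 1) * (2 : ℝ) ^ (2 * j - 1) * π ^ (2 * j) * B / F with hzdef
  have hz : HasSum (fun n : ℕ => 1 / (n : ℝ) ^ (2 * j)) z := hasSum_zeta_nat (by omega)
  have h1 : (1:ℝ) ≤ z := by
    have := le_hasSum hz 1 (fun i _ => by positivity)
    simpa using this
  have h2 : z ≤ π^2/6 := by
    apply hasSum_le _ hz hasSum_zeta_two
    intro i
    match i with
    | 0 =>
      norm_num [zero_pow (by omega : 2*j ≠ 0)]
    | (i+1) =>
      push_cast
      apply one_div_le_one_div_of_le (by positivity)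
      have hb : (1:ℝ) ≤ ((i:ℝ)+1) := by linarith [Nat.cast_nonneg (α := ℝ) i]
      exact pow_le_pow_right₀ hb (by omega)
  have hz2 : z ≤ 2 := by nlinarith [Real.pi_lt_d2, Real.pi_pos]
  have hzpos : (0:ℝ) < z := by linarith
  have key : (2:ℝ)^(2*j-1) * π^(2*j) * |B| = z * F := by
    have e : |z| = (2:ℝ)^(2*j-1) * π^(2*j) * |B| / F := by
      rw [hzdef, abs_div, abs_mul, abs_mul, abs_mul, abs_pow, abs_pow, abs_pow,
        abs_neg, abs_one, one_pow, one_mul, abs_of_pos Real.pi_pos,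
        abs_of_nonneg (by norm_num : (0:ℝ) ≤ 2), abs_of_pos hFpos]
    rw [abs_of_pos hzpos] at e
    field_simp at e
    linarith [e]
  constructor
  · have hP : (0:ℝ) < (2:ℝ)^(2*j-1) * π^(2*j) := by positivity
    have : |B| = z * F / ((2:ℝ)^(2*j-1) * π^(2*j)) := by
      field_simp [key]
      linarith [key]
    rw [this]
    exact div_pos (mul_pos hzpos hFpos) hP
  · have h2j : 2*j = (2*j-1) + 1 := by omega
    have hpow : (2:ℝ)^(2*j) = 2 * (2:ℝ)^(2*j-1) := by
      conv_lhs => rw [h2j]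
      rw [pow_succ]; ring
    calc |B| * (2*π)^(2*j) = |B| * ((2:ℝ)^(2*j) * π^(2*j)) := by rw [mul_pow]
      _ = 2 * ((2:ℝ)^(2*j-1) * π^(2*j) * |B|) := by rw [hpow]; ring
      _ = 2 * (z * F) := by rw [key]
      _ ≤ 4 * F := by nlinarith [hFpos]



lemma coreA {x : ℝ} (hx : 10000 ≤ x) (hlog : Real.log x ≤ 0.005 * x) :
    7744 * Real.log x * (x*x) ≤ (2*π*Real.exp 1)^x / (2*Real.exp 1 * x^x) * (x/12)^(x-2) := by
  have hx0 : (0:ℝ) < x := by linarith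
  have hX0 : (0:ℝ) < Real.log x := Real.log_pos (by linarith)
  set X := Real.log x with hXdef
  have hxe : x = Real.exp X := (Real.exp_log hx0).symm
  -- LHS ≤ exp (8 + 3X)
  have hL : 7744 * X * (x*x) ≤ Real.exp (8 + 3*X) := by
    have h1 : (7744:ℝ) ≤ Real.exp 9 := by
      rw [← Real.exp_log (show (0:ℝ) < 7744 by norm_num)]
      exact Real.exp_le_exp.mpr log7744_le
    have h2 : X ≤ Real.exp (X - 1) := by linarith [Real.add_one_le_exp (X-1)]
    calc 7744 * X * (x*x) ≤ Real.exp 9 * Real.exp (X-1) * (Real.exp X * Real.exp X) := by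
          rw [hxe] at *
          gcongr <;> positivity
      _ = Real.exp (8 + 3*X) := by
          rw [← Real.exp_add, ← Real.exp_add, ← Real.exp_add]; ring_nf
  -- RHS = exp (...)
  have hR : (2*π*Real.exp 1)^x / (2*Real.exp 1 * x^x) * (x/12)^(x-2)
      = Real.exp (Real.log (2*π*Real.exp 1) * x - (Real.log (2*Real.exp 1) + X * x)
          + (X - Real.log 12) * (x-2)) := by
    rw [Real.rpow_def_of_pos (by positivity), Real.rpow_def_of_pos hx0,
      Real.rpow_def_of_pos (by positivity : (0:ℝ) < x/12),
      Real.log_div hx0.ne' (by norm_num)]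
    rw [show (2*Real.exp 1) = Real.exp (Real.log (2*Real.exp 1)) by
      rw [Real.exp_log (by positivity)]]
    rw [← Real.exp_add, ← Real.exp_sub, ← Real.exp_add, Real.log_exp]
  rw [hR]
  apply le_trans hL
  apply Real.exp_le_exp.mpr
  have e1 : 2.83 * x ≤ Real.log (2*π*Real.exp 1) * x := by
    have : (2.83:ℝ) ≤ Real.log (2*π*Real.exp 1) := by rw [log2pie]; linarith [log2pi_ge]
    exact mul_le_mul_of_nonneg_right this (by linarith)
  have e2 : Real.log 12 * x ≤ 2.6 * x := mul_le_mul_of_nonneg_right log12_le (by linarith)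
  have e3 : (0:ℝ) ≤ Real.log 12 := Real.log_nonneg (by norm_num)
  nlinarith [log2e_le, hlog, hx, e1, e2, e3]

lemma coreB1 {x : ℝ} (hx : 10000 ≤ x) (hlog : Real.log x ≤ 0.005 * x) :
    8 * (x*x*x) * (Real.exp 18.72 * (41.41:ℝ)^(x/2) * x^(-((x-1)/2)))
      * ((x/18)^(x-1) * Real.exp (-7.288*(x/18)))
    ≤ (x/12)^((x-2)/2) := by
  have hx0 : (0:ℝ) < x := by linarith
  have hX0 : (0:ℝ) < Real.log x := Real.log_pos (by linarith)
  set X := Real.log x with hXdef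
  have hxe : x = Real.exp X := (Real.exp_log hx0).symm
  have hL : 8 * (x*x*x) ≤ Real.exp (7 + 3*X) := by
    have h1 : (8:ℝ) ≤ Real.exp 7 := by linarith [Real.add_one_le_exp (7:ℝ)]
    calc 8 * (x*x*x) ≤ Real.exp 7 * (Real.exp X * Real.exp X * Real.exp X) := by
          rw [hxe] at *
          gcongr <;> positivity
      _ = Real.exp (7 + 3*X) := by
          rw [← Real.exp_add, ← Real.exp_add, ← Real.exp_add]; ring_nf
  have e41 : (41.41:ℝ)^(x/2) = Real.exp (Real.log 41.41 * (x/2)) :=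
    Real.rpow_def_of_pos (by norm_num) _
  have ex1 : x^(-((x-1)/2)) = Real.exp (X * (-((x-1)/2))) := Real.rpow_def_of_pos hx0 _
  have e18 : (x/18)^(x-1) = Real.exp ((X - Real.log 18) * (x-1)) := by
    rw [Real.rpow_def_of_pos (by positivity), Real.log_div hx0.ne' (by norm_num)]
  have eR : (x/12)^((x-2)/2) = Real.exp ((X - Real.log 12) * ((x-2)/2)) := by
    rw [Real.rpow_def_of_pos (by positivity), Real.log_div hx0.ne' (by norm_num)]
  rw [e41, ex1, e18, eR]
  calc 8 * (x*x*x) * (Real.exp 18.72 * Real.exp (Real.log 41.41 * (x/2)) * Real.exp (X * (-((x-1)/2))))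
        * (Real.exp ((X - Real.log 18) * (x-1)) * Real.exp (-7.288*(x/18)))
      ≤ Real.exp (7 + 3*X) * (Real.exp 18.72 * Real.exp (Real.log 41.41 * (x/2)) * Real.exp (X * (-((x-1)/2))))
        * (Real.exp ((X - Real.log 18) * (x-1)) * Real.exp (-7.288*(x/18))) := by
        gcongr
    _ = Real.exp ((7 + 3*X) + (18.72 + Real.log 41.41 * (x/2) + X * (-((x-1)/2)))
          + ((X - Real.log 18) * (x-1) + (-7.288*(x/18)))) := by
        rw [← Real.exp_add, ← Real.exp_add, ← Real.exp_add, ← Real.exp_add, ← Real.exp_add]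
    _ ≤ Real.exp ((X - Real.log 12) * ((x-2)/2)) := by
        apply Real.exp_le_exp.mpr
        have e1 : Real.log 41.41 * (x/2) ≤ 3.76 * (x/2) :=
          mul_le_mul_of_nonneg_right log41_le (by linarith)
        have e2 : 2.8 * (x-1) ≤ Real.log 18 * (x-1) :=
          mul_le_mul_of_nonneg_right log18_ge (by linarith)
        have e3 : Real.log 12 * ((x-2)/2) ≤ 2.6 * ((x-2)/2) :=
          mul_le_mul_of_nonneg_right log12_le (by linarith)
        have e4 : Real.log 18 ≤ 17 := by linarith [Real.log_le_sub_one_of_pos (show (0:ℝ) < 18 by norm_num)]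
        have e5 : (0:ℝ) ≤ Real.log 12 := Real.log_nonneg (by norm_num)
        nlinarith [hlog, hx, e1, e2, e3, e4, e5]

lemma coreB2 {x : ℝ} (hx : 10000 ≤ x) (hlog : Real.log x ≤ 0.005 * x) :
    8 * (x*x) * (Real.exp 18.72 * (41.41:ℝ)^(x/2) * x^(-((x-1)/2))) * Real.exp (-7.288*(x/18))
    ≤ (2*π*Real.exp 1)^x / (2*Real.exp 1 * x^x) * (x/12)^((x-2)/2) := by
  have hx0 : (0:ℝ) < x := by linarith
  have hX0 : (0:ℝ) < Real.log x := Real.log_pos (by linarith)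
  set X := Real.log x with hXdef
  have hxe : x = Real.exp X := (Real.exp_log hx0).symm
  have hL : 8 * (x*x) ≤ Real.exp (7 + 2*X) := by
    have h1 : (8:ℝ) ≤ Real.exp 7 := by linarith [Real.add_one_le_exp (7:ℝ)]
    calc 8 * (x*x) ≤ Real.exp 7 * (Real.exp X * Real.exp X) := by
          rw [hxe] at *
          gcongr <;> positivity
      _ = Real.exp (7 + 2*X) := by
          rw [← Real.exp_add, ← Real.exp_add]; ring_nf
  have e41 : (41.41:ℝ)^(x/2) = Real.exp (Real.log 41.41 * (x/2)) :=
    Real.rpow_def_of_pos (by norm_num) _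
  have ex1 : x^(-((x-1)/2)) = Real.exp (X * (-((x-1)/2))) := Real.rpow_def_of_pos hx0 _
  have hR : (2*π*Real.exp 1)^x / (2*Real.exp 1 * x^x) * (x/12)^((x-2)/2)
      = Real.exp (Real.log (2*π*Real.exp 1) * x - (Real.log (2*Real.exp 1) + X * x)
          + (X - Real.log 12) * ((x-2)/2)) := by
    rw [Real.rpow_def_of_pos (by positivity), Real.rpow_def_of_pos hx0,
      Real.rpow_def_of_pos (by positivity : (0:ℝ) < x/12),
      Real.log_div hx0.ne' (by norm_num)]
    rw [show (2*Real.exp 1) = Real.exp (Real.log (2*Real.exp 1)) by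
      rw [Real.exp_log (by positivity)]]
    rw [← Real.exp_add, ← Real.exp_sub, ← Real.exp_add, Real.log_exp]
  rw [e41, ex1, hR]
  calc 8 * (x*x) * (Real.exp 18.72 * Real.exp (Real.log 41.41 * (x/2)) * Real.exp (X * (-((x-1)/2))))
        * Real.exp (-7.288*(x/18))
      ≤ Real.exp (7 + 2*X) * (Real.exp 18.72 * Real.exp (Real.log 41.41 * (x/2)) * Real.exp (X * (-((x-1)/2))))
        * Real.exp (-7.288*(x/18)) := by
        gcongr
    _ = Real.exp ((7 + 2*X) + (18.72 + Real.log 41.41 * (x/2) + X * (-((x-1)/2))) + (-7.288*(x/18))) := by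
        rw [← Real.exp_add, ← Real.exp_add, ← Real.exp_add, ← Real.exp_add]
    _ ≤ Real.exp (Real.log (2*π*Real.exp 1) * x - (Real.log (2*Real.exp 1) + X * x)
          + (X - Real.log 12) * ((x-2)/2)) := by
        apply Real.exp_le_exp.mpr
        have e1 : Real.log 41.41 * (x/2) ≤ 3.76 * (x/2) :=
          mul_le_mul_of_nonneg_right log41_le (by linarith)
        have e2 : 2.83 * x ≤ Real.log (2*π*Real.exp 1) * x := by
          have : (2.83:ℝ) ≤ Real.log (2*π*Real.exp 1) := by rw [log2pie]; linarith [log2pi_ge]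
          exact mul_le_mul_of_nonneg_right this (by linarith)
        have e3 : Real.log 12 * ((x-2)/2) ≤ 2.6 * ((x-2)/2) :=
          mul_le_mul_of_nonneg_right log12_le (by linarith)
        have e5 : (0:ℝ) ≤ Real.log 12 := Real.log_nonneg (by norm_num)
        nlinarith [hlog, hx, e1, e2, e3, e5, log2e_le]



lemma assemble (k : ℕ) (E M N S T σn : ℝ)
    (hκ : (10000:ℝ) ≤ (k:ℝ))
    (hE : (2*π*Real.exp 1)^k/(2*Real.exp 1*(k:ℝ)^k) ≤ E) (hE0 : 0 < E)
    (hlog : Real.log (k:ℝ) ≤ 0.005*(k:ℝ))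
    (hM12 : (k:ℝ)/12 ≤ M) (hM1 : 1 ≤ M) (hMN : M ≤ N) (hMκ : M ≤ (k:ℝ))
    (hS0 : 0 ≤ S) (hSb : S ≤ E*((k:ℝ)*(k:ℝ)))
    (hT0 : 0 ≤ T)
    (hTb : T ≤ (k:ℝ)*(E*(k:ℝ)*(((k:ℝ)/18)^((k:ℝ)-1)*Real.exp (-7.288*((k:ℝ)/18)))
        + Real.exp (-7.288*((k:ℝ)/18))))
    (hσ : N^(k-1) ≤ σn) :
    2*(Real.sqrt (Real.log (k:ℝ))*(11*Real.sqrt S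
      + (Real.exp 18.72*(41.41:ℝ)^((k:ℝ)/2)*(k:ℝ)^(-(((k:ℝ)-1)/2)))*T))*N^((k:ℝ)/2) ≤ E*σn := by
  have hkN : (10000:ℕ) ≤ k := by exact_mod_cast hκ
  set κ := (k:ℝ) with hκdef
  have hκ0 : (0:ℝ) < κ := by linarith
  have hM0 : (0:ℝ) < M := by linarith
  have hN0 : (0:ℝ) < N := by linarith
  have hlog0 : (0:ℝ) ≤ Real.log κ := Real.log_nonneg (by linarith)
  set L := Real.sqrt (Real.log κ) with hLdef
  have hL0 : (0:ℝ) ≤ L := Real.sqrt_nonneg _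
  have hLκ : L ≤ κ := by
    have h1 : Real.log κ ≤ κ^2 := by nlinarith
    calc L ≤ Real.sqrt (κ^2) := Real.sqrt_le_sqrt h1
      _ = κ := Real.sqrt_sq hκ0.le
  set X := Real.exp 18.72*(41.41:ℝ)^(κ/2)*κ^(-((κ-1)/2)) with hXdef
  have hX0 : (0:ℝ) ≤ X := by positivity
  set ε := Real.exp (-7.288*(κ/18)) with hεdef
  set G := (κ/18)^(κ-1)*ε with hGdef
  have hε0 : (0:ℝ) < ε := Real.exp_pos _
  have hG0 : (0:ℝ) ≤ G := by positivity
  set q := (κ-2)/2 with hqdef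
  have hq0 : (0:ℝ) ≤ q := by rw [hqdef]; linarith
  have hMq0 : (0:ℝ) ≤ M^q := Real.rpow_nonneg hM0.le q
  -- conversions between rpow and natural powers
  have hc1 : (2*π*Real.exp 1)^(κ:ℝ) = (2*π*Real.exp 1)^(k:ℕ) := by
    rw [hκdef]; exact Real.rpow_natCast _ k
  have hc2 : (κ:ℝ)^(κ:ℝ) = κ^(k:ℕ) := by rw [hκdef]; exact Real.rpow_natCast _ k
  have hck2 : ((k-2:ℕ):ℝ) = κ - 2 := by
    rw [hκdef]; push_cast [Nat.cast_sub (by omega : 2 ≤ k)]; ring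
  have hck1 : ((k-1:ℕ):ℝ) = κ - 1 := by
    rw [hκdef]; push_cast [Nat.cast_sub (by omega : 1 ≤ k)]; ring
  have hc3 : (κ/12)^(κ-2:ℝ) = (κ/12)^((k-2:ℕ)) := by
    rw [← Real.rpow_natCast (κ/12) (k-2), hck2]
  -- the three pieces
  have hMq12 : (κ/12)^q ≤ M^q := Real.rpow_le_rpow (by positivity) hM12 hq0
  -- piece A
  have cA := coreA (x := κ) hκ hlog
  rw [hc1, hc2, hc3] at cA
  have cA2 : 7744 * Real.log κ * (κ*κ) ≤ E * M^((k-2:ℕ)) := by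
    calc 7744 * Real.log κ * (κ*κ) ≤ ((2*π*Real.exp 1)^(k:ℕ)/(2*Real.exp 1*κ^(k:ℕ))) * (κ/12)^((k-2:ℕ)) := cA
      _ ≤ E * (κ/12)^((k-2:ℕ)) := by
          apply mul_le_mul_of_nonneg_right hE (by positivity)
      _ ≤ E * M^((k-2:ℕ)) := by
          apply mul_le_mul_of_nonneg_left _ hE0.le
          exact pow_le_pow_left₀ (by positivity) hM12 _
  have hMsq : E * M^((k-2:ℕ)) = (Real.sqrt E * M^q)^2 := by
    have h1 : (M^q)^2 = M^((k-2:ℕ)) := by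
      rw [← Real.rpow_natCast M (k-2), hck2]
      rw [sq, ← Real.rpow_add hM0]
      congr 1
      rw [hqdef]; ring
    rw [mul_pow, Real.sq_sqrt hE0.le, h1]
  have hsq : 88*(L*κ) ≤ Real.sqrt E * M^q := by
    have h2 : (88*(L*κ))^2 = 7744 * Real.log κ * (κ*κ) := by
      have : L^2 = Real.log κ := Real.sq_sqrt hlog0
      nlinarith [this]
    have h3 : (88*(L*κ))^2 ≤ (Real.sqrt E * M^q)^2 := by
      rw [h2, ← hMsq]; exact cA2
    have h4 := Real.sqrt_le_sqrt h3
    rwa [Real.sqrt_sq (by positivity), Real.sqrt_sq (by positivity)] at h4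
  -- piece B1 and B2
  have cB1 := coreB1 (x := κ) hκ hlog
  rw [← hXdef, ← hεdef, ← hGdef, ← hqdef] at cB1
  have cB2 := coreB2 (x := κ) hκ hlog
  rw [← hXdef, ← hεdef, ← hqdef, hc1, hc2] at cB2
  have hTb2 : X*T ≤ X*(κ*(E*κ*G + ε)) := mul_le_mul_of_nonneg_left hTb hX0
  have p23 : L*(X*T) ≤ E*M^q/8 + E*M^q/8 := by
    have h1 : L*(X*T) ≤ E*(κ*(κ*(κ*(X*G)))) + κ*(κ*(X*ε)) := by
      calc L*(X*T) ≤ κ*(X*T) := mul_le_mul_of_nonneg_right hLκ (by positivity)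
        _ ≤ κ*(X*(κ*(E*κ*G+ε))) := mul_le_mul_of_nonneg_left hTb2 hκ0.le
        _ = E*(κ*(κ*(κ*(X*G)))) + κ*(κ*(X*ε)) := by ring
    have h5 : κ*(κ*(κ*(X*G))) ≤ M^q/8 := by linarith [le_trans cB1 hMq12]
    have hB1' : E*(κ*(κ*(κ*(X*G)))) ≤ E*M^q/8 := by
      have := mul_le_mul_of_nonneg_left h5 hE0.le
      linarith
    have h6 : (2*π*Real.exp 1)^(k:ℕ)/(2*Real.exp 1*κ^(k:ℕ))*(κ/12)^q ≤ E*M^q := by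
      apply mul_le_mul hE hMq12 (by positivity) hE0.le
    have h7 : κ*(κ*(X*ε)) ≤ E*M^q/8 := by linarith [le_trans cB2 h6]
    linarith
  have hS2 : Real.sqrt S ≤ Real.sqrt E * κ := by
    have h := Real.sqrt_le_sqrt hSb
    rwa [Real.sqrt_mul hE0.le, Real.sqrt_mul_self hκ0.le] at h
  have p1 : L*(11*Real.sqrt S) ≤ E*M^q/8 := by
    have h1 : L*(11*Real.sqrt S) ≤ 11*(Real.sqrt E*(L*κ)) := by
      calc L*(11*Real.sqrt S) ≤ L*(11*(Real.sqrt E*κ)) := by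
            apply mul_le_mul_of_nonneg_left (by linarith [hS2]) hL0
        _ = 11*(Real.sqrt E*(L*κ)) := by ring
    have h2 : 88*(Real.sqrt E*(L*κ)) ≤ E*M^q := by
      have h3 := mul_le_mul_of_nonneg_left hsq (Real.sqrt_nonneg E)
      calc 88*(Real.sqrt E*(L*κ)) = Real.sqrt E*(88*(L*κ)) := by ring
        _ ≤ Real.sqrt E*(Real.sqrt E*M^q) := h3
        _ = E*M^q := by rw [← mul_assoc, Real.mul_self_sqrt hE0.le]
    linarith
  have hC : L*(11*Real.sqrt S + X*T) ≤ (3/8)*(E*M^q) := by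
    rw [mul_add]; linarith [p1, p23]
  have hq2 : M^q ≤ N^q := Real.rpow_le_rpow hM0.le hMN hq0
  have hfin : 2*(L*(11*Real.sqrt S + X*T)) ≤ E*N^q := by
    have h8 : E*M^q ≤ E*N^q := mul_le_mul_of_nonneg_left hq2 hE0.le
    have h9 : (0:ℝ) ≤ E*M^q := mul_nonneg hE0.le hMq0
    linarith
  calc 2*(L*(11*Real.sqrt S + X*T))*N^(κ/2)
      ≤ (E*N^q)*N^(κ/2) := mul_le_mul_of_nonneg_right hfin (Real.rpow_nonneg hN0.le _)
    _ = E*(N^q*N^(κ/2)) := by ring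
    _ = E*N^(q+κ/2) := by rw [← Real.rpow_add hN0]
    _ = E*N^((k-1:ℕ):ℝ) := by
        rw [hck1]; congr 1; rw [hqdef]; ring
    _ = E*N^((k-1:ℕ)) := by rw [Real.rpow_natCast]
    _ ≤ E*σn := mul_le_mul_of_nonneg_left hσ hE0.le








/-- There exists `K` such that for every `k ≥ K` with `4 ∣ k`, and every
`b : ℕ → ℝ` with `|b(m)| ≤ min(a(m), 1)` for `1 ≤ m < m_k`, one has
`2 C_k n^{k/2} ≤ a(n)` for all integers `n ≥ m_k`. -/
theorem floored_eisenstein_key_bound :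
    ∃ K : ℕ, ∀ k : ℕ, K ≤ k → k % 4 = 0 →
      ∀ b : ℕ → ℝ, (∀ m : ℕ, 1 ≤ m → m < mDim k → |b m| ≤ min (aCoef k m) 1) →
        ∀ n : ℕ, mDim k ≤ n → 2 * C7 k b * (n : ℝ) ^ ((k : ℝ) / 2) ≤ aCoef k n := by
  have hev : ∀ᶠ k : ℕ in atTop, ((10000:ℝ) ≤ (k:ℝ) ∧ Real.log (k:ℝ) ≤ 0.005*(k:ℝ)) := by
    have h1 : ∀ᶠ k : ℕ in atTop, (10000:ℝ) ≤ (k:ℝ) := by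
      filter_upwards [Filter.eventually_ge_atTop 10000] with k hk
      exact_mod_cast hk
    have h2' : ∀ᶠ x : ℝ in atTop, ‖Real.log x‖ ≤ 0.005*‖x‖ :=
      Real.isLittleO_log_id_atTop.def (by norm_num)
    have h2 : ∀ᶠ k : ℕ in atTop, Real.log (k:ℝ) ≤ 0.005*(k:ℝ) := by
      filter_upwards [tendsto_natCast_atTop_atTop.eventually h2', h1] with k hk hk1
      have habs : |Real.log (k:ℝ)| ≤ 0.005*|(k:ℝ)| := by
        simpa [Real.norm_eq_abs] using hk
      calc Real.log (k:ℝ) ≤ |Real.log (k:ℝ)| := le_abs_self _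
        _ ≤ 0.005*|(k:ℝ)| := habs
        _ = 0.005*(k:ℝ) := by rw [abs_of_pos (by linarith)]
    filter_upwards [h1, h2] with k a bb
    exact ⟨a, bb⟩
  obtain ⟨K, hK⟩ := Filter.eventually_atTop.mp hev
  refine ⟨K, fun k hk hk4 b hb n hn => ?_⟩
  obtain ⟨hκ, hlog⟩ := hK k hk
  have hkN : 10000 ≤ k := by exact_mod_cast hκ
  have hjk : 2*(k/2) = k := by omega
  have hbern := bernoulli_bounds (j := k/2) (by omega)
  rw [hjk] at hbern
  obtain ⟨hBpos, hBle⟩ := hbern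
  have hEpos : 0 < 2*(k:ℝ)/|((bernoulli k:ℚ):ℝ)| := div_pos (by positivity) hBpos
  have hfact := factorial_aux k (by omega)
  have hE : (2*π*Real.exp 1)^k/(2*Real.exp 1*(k:ℝ)^k) ≤ 2*(k:ℝ)/|((bernoulli k:ℚ):ℝ)| := by
    rw [div_le_div_iff₀ (by positivity) hBpos]
    have e1 : (2*π*Real.exp 1)^k = (2*π)^k*(Real.exp 1)^k := by rw [mul_pow]
    have e2 : (Real.exp 1)^k = (Real.exp 1)^(k-1)*Real.exp 1 := by
      conv_lhs => rw [(by omega : k = (k-1)+1)]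
      rw [pow_succ]
    have e3 : (k:ℝ)^(k+1) = (k:ℝ)^k*(k:ℝ) := pow_succ _ _
    calc (2*π*Real.exp 1)^k*|((bernoulli k:ℚ):ℝ)|
        = (Real.exp 1)^k*(|((bernoulli k:ℚ):ℝ)| * (2*π)^k) := by rw [e1]; ring
      _ ≤ (Real.exp 1)^k*(4*((k)!:ℝ)) := mul_le_mul_of_nonneg_left hBle (by positivity)
      _ = 4*(((k)!:ℝ)*(Real.exp 1)^(k-1))*Real.exp 1 := by rw [e2]; ring
      _ ≤ 4*((k:ℝ)^(k+1))*Real.exp 1 := by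
          exact mul_le_mul_of_nonneg_right
            (mul_le_mul_of_nonneg_left hfact (by norm_num : (0:ℝ) ≤ 4)) (Real.exp_pos 1).le
      _ = 2*(k:ℝ)*(2*Real.exp 1*(k:ℝ)^k) := by rw [e3]; ring
  set E := 2*(k:ℝ)/|((bernoulli k:ℚ):ℝ)| with hEdef
  have hm1 : (1:ℕ) ≤ mDim k := by unfold mDim; omega
  have hmk : mDim k ≤ k := by unfold mDim; omega
  have hM12 : (k:ℝ)/12 ≤ (mDim k:ℝ) := by
    have h : k < 12*(mDim k) := by unfold mDim; omega
    have h2 : (k:ℝ) < 12*(mDim k:ℝ) := by exact_mod_cast h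
    linarith
  have hM1 : (1:ℝ) ≤ (mDim k:ℝ) := by exact_mod_cast hm1
  have hMκ : (mDim k:ℝ) ≤ (k:ℝ) := by exact_mod_cast hmk
  have hMN : (mDim k:ℝ) ≤ (n:ℝ) := by exact_mod_cast hn
  have hn1 : 1 ≤ n := le_trans hm1 hn
  have hσ : (n:ℝ)^(k-1) ≤ sigmaR (k-1) n := le_sigmaR _ hn1
  -- bound on S
  have hSb : (∑ m ∈ Finset.Ico 1 (mDim k), (b m)^2/(m:ℝ)^(k-1)) ≤ E*((k:ℝ)*(k:ℝ)) := by
    have hcard : (Finset.Ico 1 (mDim k)).card ≤ k := by rw [Nat.card_Ico]; omega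
    calc (∑ m ∈ Finset.Ico 1 (mDim k), (b m)^2/(m:ℝ)^(k-1))
        ≤ ∑ _m ∈ Finset.Ico 1 (mDim k), E*(k:ℝ) := by
          apply Finset.sum_le_sum
          intro m' hm'
          rw [Finset.mem_Ico] at hm'
          have h1 : (1:ℝ) ≤ (m':ℝ) := by exact_mod_cast hm'.1
          have hP : (0:ℝ) < (m':ℝ)^(k-1) := by positivity
          have hmk' : (m':ℝ) ≤ (k:ℝ) := by
            have h3 : m' ≤ k := by have h4 := hm'.2; unfold mDim at h4; omega
            exact_mod_cast h3
          have hbm := hb m' hm'.1 hm'.2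
          have ha : aCoef k m' = E*sigmaR (k-1) m' := rfl
          have haσ : sigmaR (k-1) m' ≤ (m':ℝ)^(k-1)*m' := sigmaR_le _ _
          have hb1 : |b m'| ≤ 1 := le_trans hbm (min_le_right _ _)
          have hb2 : |b m'| ≤ E*sigmaR (k-1) m' := by
            rw [← ha]; exact le_trans hbm (min_le_left _ _)
          have hb3 : (b m')^2 ≤ E*((m':ℝ)^(k-1)*(m':ℝ)) := by
            have hEσ : (0:ℝ) ≤ E*sigmaR (k-1) m' :=
              mul_nonneg hEpos.le (sigmaR_nonneg _ _)
            have h4 : |b m'| *|b m'| ≤ (E*sigmaR (k-1) m')*1 :=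
              mul_le_mul hb2 hb1 (abs_nonneg _) hEσ
            calc (b m')^2 = |b m'| * |b m'| := by rw [pow_two, ← abs_mul_abs_self]
              _ ≤ (E*sigmaR (k-1) m')*1 := h4
              _ = E*sigmaR (k-1) m' := mul_one _
              _ ≤ E*((m':ℝ)^(k-1)*(m':ℝ)) := mul_le_mul_of_nonneg_left haσ hEpos.le
          rw [div_le_iff₀ hP]
          calc (b m')^2 ≤ E*((m':ℝ)^(k-1)*(m':ℝ)) := hb3
            _ ≤ E*((m':ℝ)^(k-1)*(k:ℝ)) := by
                apply mul_le_mul_of_nonneg_left _ hEpos.le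
                exact mul_le_mul_of_nonneg_left hmk' (by positivity)
            _ = E*(k:ℝ)*(m':ℝ)^(k-1) := by ring
      _ = ((Finset.Ico 1 (mDim k)).card : ℝ) * (E*(k:ℝ)) := by
          rw [Finset.sum_const, nsmul_eq_mul]
      _ ≤ (k:ℝ)*(E*(k:ℝ)) := by
          apply mul_le_mul_of_nonneg_right _ (by positivity)
          exact_mod_cast hcard
      _ = E*((k:ℝ)*(k:ℝ)) := by ring
  -- bound on T
  have hTb : |∑ m ∈ Finset.Ico 1 (mDim k), b m*Real.exp (-7.288*(m:ℝ))|
      ≤ (k:ℝ)*(E*(k:ℝ)*(((k:ℝ)/18)^((k:ℝ)-1)*Real.exp (-7.288*((k:ℝ)/18)))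
        + Real.exp (-7.288*((k:ℝ)/18))) := by
    have hcard : (Finset.Ico 1 (mDim k)).card ≤ k := by rw [Nat.card_Ico]; omega
    have hW0 : (0:ℝ) ≤ E*(k:ℝ)*(((k:ℝ)/18)^((k:ℝ)-1)*Real.exp (-7.288*((k:ℝ)/18)))
        + Real.exp (-7.288*((k:ℝ)/18)) := by positivity
    calc |∑ m ∈ Finset.Ico 1 (mDim k), b m*Real.exp (-7.288*(m:ℝ))|
        ≤ ∑ m ∈ Finset.Ico 1 (mDim k), |b m*Real.exp (-7.288*(m:ℝ))| :=
          Finset.abs_sum_le_sum_abs _ _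
      _ ≤ ∑ _m ∈ Finset.Ico 1 (mDim k),
            (E*(k:ℝ)*(((k:ℝ)/18)^((k:ℝ)-1)*Real.exp (-7.288*((k:ℝ)/18)))
              + Real.exp (-7.288*((k:ℝ)/18))) := by
          apply Finset.sum_le_sum
          intro m' hm'
          rw [Finset.mem_Ico] at hm'
          have h1 : (1:ℝ) ≤ (m':ℝ) := by exact_mod_cast hm'.1
          have hmk' : (m':ℝ) ≤ (k:ℝ) := by
            have h3 : m' ≤ k := by have h4 := hm'.2; unfold mDim at h4; omega
            exact_mod_cast h3
          have hbm := hb m' hm'.1 hm'.2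
          have hb1 : |b m'| ≤ 1 := le_trans hbm (min_le_right _ _)
          rw [abs_mul, Real.abs_exp]
          by_cases hc : (m':ℝ) ≤ (k:ℝ)/18
          · have ha : aCoef k m' = E*sigmaR (k-1) m' := rfl
            have hb2 : |b m'| ≤ E*sigmaR (k-1) m' := by
              rw [← ha]; exact le_trans hbm (min_le_left _ _)
            have haσ : sigmaR (k-1) m' ≤ (m':ℝ)^(k-1)*m' := sigmaR_le _ _
            have hmono : (m':ℝ)^((k:ℝ)-1)*Real.exp (-7.288*(m':ℝ))
                ≤ ((k:ℝ)/18)^((k:ℝ)-1)*Real.exp (-7.288*((k:ℝ)/18)) := by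
              apply mono_aux h1 hc
              linarith
            have hpow : ((m':ℝ))^(k-1) = (m':ℝ)^((k:ℝ)-1) := by
              rw [← Real.rpow_natCast (m':ℝ) (k-1)]
              congr 1
              push_cast [Nat.cast_sub (by omega : 1 ≤ k)]
              ring
            calc |b m'| *Real.exp (-7.288*(m':ℝ))
                ≤ (E*((m':ℝ)^(k-1)*(m':ℝ)))*Real.exp (-7.288*(m':ℝ)) := by
                  apply mul_le_mul_of_nonneg_right _ (Real.exp_pos _).le
                  exact le_trans hb2 (mul_le_mul_of_nonneg_left haσ hEpos.le)
              _ = E*(m':ℝ)*((m':ℝ)^((k:ℝ)-1)*Real.exp (-7.288*(m':ℝ))) := by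
                  rw [hpow]; ring
              _ ≤ E*(k:ℝ)*(((k:ℝ)/18)^((k:ℝ)-1)*Real.exp (-7.288*((k:ℝ)/18))) := by
                  apply mul_le_mul (mul_le_mul_of_nonneg_left hmk' hEpos.le) hmono
                    (by positivity) (by positivity)
              _ ≤ E*(k:ℝ)*(((k:ℝ)/18)^((k:ℝ)-1)*Real.exp (-7.288*((k:ℝ)/18)))
                  + Real.exp (-7.288*((k:ℝ)/18)) := le_add_of_nonneg_right (Real.exp_pos _).le
          · push_neg at hc
            have hexp : Real.exp (-7.288*(m':ℝ)) ≤ Real.exp (-7.288*((k:ℝ)/18)) := by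
              apply Real.exp_le_exp.mpr
              linarith
            calc |b m'| *Real.exp (-7.288*(m':ℝ))
                ≤ 1*Real.exp (-7.288*((k:ℝ)/18)) :=
                  mul_le_mul hb1 hexp (Real.exp_pos _).le zero_le_one
              _ = Real.exp (-7.288*((k:ℝ)/18)) := one_mul _
              _ ≤ E*(k:ℝ)*(((k:ℝ)/18)^((k:ℝ)-1)*Real.exp (-7.288*((k:ℝ)/18)))
                  + Real.exp (-7.288*((k:ℝ)/18)) := le_add_of_nonneg_left (by positivity)
      _ = ((Finset.Ico 1 (mDim k)).card : ℝ)
            * (E*(k:ℝ)*(((k:ℝ)/18)^((k:ℝ)-1)*Real.exp (-7.288*((k:ℝ)/18)))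
              + Real.exp (-7.288*((k:ℝ)/18))) := by
          rw [Finset.sum_const, nsmul_eq_mul]
      _ ≤ (k:ℝ)*(E*(k:ℝ)*(((k:ℝ)/18)^((k:ℝ)-1)*Real.exp (-7.288*((k:ℝ)/18)))
              + Real.exp (-7.288*((k:ℝ)/18))) := by
          apply mul_le_mul_of_nonneg_right _ hW0
          exact_mod_cast hcard
  simp only [C7, aCoef]
  exact assemble k E (mDim k:ℝ) (n:ℝ)
    (∑ m ∈ Finset.Ico 1 (mDim k), (b m)^2/(m:ℝ)^(k-1))
    (|∑ m ∈ Finset.Ico 1 (mDim k), b m*Real.exp (-7.288*(m:ℝ))|)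
    (sigmaR (k-1) n)
    hκ hE hEpos hlog hM12 hM1 hMN hMκ
    (by positivity) hSb (abs_nonneg _) hTb hσ
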